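/- If G is an X-Gorenstein projective R-module, then G admits an X-complete projective resolution F := ... → F_1 → F_0 → F^0 → F^1 → ... in which all modules F_i and F^i are free, with G ≅ Im(F_0 → F^0). -/

import Mathlib

open CategoryTheory DirectSum

universe u

/-- An `𝒳`-complete projective resolution: a doubly infinite exact sequence of
projective `R`-modules that remains exact after applying `Hom_R(-, Y)`
for every `Y` in the class `𝒳`. -/
structure XCompleteResolution (R : Type u) [Ring R] (𝒳 : ModuleCat.{u} R → Prop) where
  P : ℤ → ModuleCat.{u} R
  d : ∀ n : ℤ, P n →ₗ[R] P (n + 1)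
  projective : ∀ n, Module.Projective R (P n)
  exact : ∀ n, Function.Exact (d n) (d (n + 1))
  homExact : ∀ (Y : ModuleCat.{u} R), 𝒳 Y → ∀ n : ℤ,
    Function.Exact (fun f : P (n + 1 + 1) →ₗ[R] Y => f ∘ₗ d (n + 1))
      (fun f : P (n + 1) →ₗ[R] Y => f ∘ₗ d n)

/-- `G` is `𝒳`-Gorenstein projective: it is a kernel in an `𝒳`-complete
projective resolution. -/
def XGorensteinProjective (R : Type u) [Ring R] (𝒳 : ModuleCat.{u} R → Prop)
    (G : ModuleCat.{u} R) : Prop :=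
  ∃ C : XCompleteResolution R 𝒳, Nonempty (G ≃ₗ[R] LinearMap.ker (C.d 0))

/-- `ResWithKernel R 𝒞 n K M` says that there is an exact sequence
`0 → K → G_{n-1} → ⋯ → G_0 → M → 0` in which every `G_i` belongs to the class `𝒞`. -/
def ResWithKernel (R : Type u) [Ring R] (𝒞 : ModuleCat.{u} R → Prop) :
    ℕ → ModuleCat.{u} R → ModuleCat.{u} R → Prop
  | 0, K, M => Nonempty (K ≃ₗ[R] M)
  | n + 1, K, M => ∃ (G L : ModuleCat.{u} R) (f : L →ₗ[R] G) (g : G →ₗ[R] M),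
      𝒞 G ∧ Function.Injective f ∧ Function.Surjective g ∧ Function.Exact f g ∧
      ResWithKernel R 𝒞 n K L

/-- The resolution dimension of `M` with respect to a class `𝒞` of modules:
the least length of a resolution of `M` by modules in `𝒞` (`⊤` if none exists). -/
noncomputable def relDim (R : Type u) [Ring R] (𝒞 : ModuleCat.{u} R → Prop)
    (M : ModuleCat.{u} R) : ℕ∞ :=
  sInf {n : ℕ∞ | ∃ m : ℕ, n = m ∧ ∃ K, 𝒞 K ∧ ResWithKernel R 𝒞 m K M}

/-- The `𝒳`-Gorenstein projective dimension of `M`. -/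
noncomputable def xGpd (R : Type u) [Ring R] (𝒳 : ModuleCat.{u} R → Prop)
    (M : ModuleCat.{u} R) : ℕ∞ :=
  relDim R (XGorensteinProjective R 𝒳) M

/-- The projective dimension of `M`. -/
noncomputable def pdim (R : Type u) [Ring R] (M : ModuleCat.{u} R) : ℕ∞ :=
  relDim R (fun N => Module.Projective R N) M

/-- The Gorenstein projective dimension of `M`:
the `𝒳`-Gorenstein projective dimension for `𝒳` the class of projective modules. -/
noncomputable def gpd (R : Type u) [Ring R] (M : ModuleCat.{u} R) : ℕ∞ :=
  xGpd R (fun N => Module.Projective R N) M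

namespace XGPaux
variable {R : Type u} [Ring R]

section Swindle
variable (R)
variable (M N : Type u) [AddCommGroup M] [AddCommGroup N] [Module R M] [Module R N]

/-- A direct sum of products splits as a product of direct sums. -/
noncomputable def dsProd : (⨁ _ : ℕ, (M × N)) ≃ₗ[R] (⨁ _ : ℕ, M) × (⨁ _ : ℕ, N) where
  toFun f := (DFinsupp.mapRange.linearMap (fun _ : ℕ => LinearMap.fst R M N) f,
              DFinsupp.mapRange.linearMap (fun _ : ℕ => LinearMap.snd R M N) f)
  invFun z := DFinsupp.mapRange.linearMap (fun _ : ℕ => LinearMap.inl R M N) z.1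
            + DFinsupp.mapRange.linearMap (fun _ : ℕ => LinearMap.inr R M N) z.2
  map_add' f g := by simp only [map_add]; rfl
  map_smul' c f := by simp only [map_smul]; rfl
  left_inv f := by
    refine DFinsupp.ext fun i => ?_
    simp [DFinsupp.mapRange.linearMap_apply, DFinsupp.mapRange_apply, Prod.ext_iff]
  right_inv z := by
    refine Prod.ext (DFinsupp.ext fun i => ?_) (DFinsupp.ext fun i => ?_) <;>
      simp [DFinsupp.mapRange.linearMap_apply, DFinsupp.mapRange_apply]

/-- Absorption: `M ⊕ M^(ℕ) ≃ M^(ℕ)`. -/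
noncomputable def dsAbsorb : (M × ⨁ _ : ℕ, M) ≃ₗ[R] ⨁ _ : ℕ, M :=
  (DirectSum.lequivProdDirectSum (R := R) (α := fun _ : Option ℕ => M)).symm.trans
    (DirectSum.lequivCongrLeft R (Denumerable.eqv (Option ℕ)))

variable {R M N}

lemma swindle_core (Pc Kc : Type u) [AddCommGroup Pc] [AddCommGroup Kc]
    [Module R Pc] [Module R Kc] (hfree : Module.Free R (Kc × Pc)) :
    ∃ T : ModuleCat.{u} R, Module.Free R T ∧ Module.Free R (Pc × ↑T) := by
  haveI := hfree
  haveI hPK : Module.Free R (Pc × Kc) := Module.Free.of_equiv (LinearEquiv.prodComm R Kc Pc)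
  refine ⟨ModuleCat.of R (⨁ _ : ℕ, (Kc × Pc)),
    (show Module.Free R (⨁ _ : ℕ, (Kc × Pc)) from inferInstance), ?_⟩
  have e : (Pc × ⨁ _ : ℕ, (Kc × Pc)) ≃ₗ[R] ⨁ _ : ℕ, (Pc × Kc) :=
    ((LinearEquiv.refl R Pc).prodCongr (dsProd R Kc Pc)).trans <|
      (((LinearEquiv.refl R Pc).prodCongr (LinearEquiv.prodComm R _ _)).trans <|
        ((LinearEquiv.prodAssoc R Pc (⨁ _ : ℕ, Pc) (⨁ _ : ℕ, Kc)).symm.trans <|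
          ((dsAbsorb R Pc).prodCongr (LinearEquiv.refl R (⨁ _ : ℕ, Kc))).trans
            (dsProd R Pc Kc).symm))
  exact Module.Free.of_equiv e.symm

lemma exists_free_compl (P : ModuleCat.{u} R) (hP : Module.Projective R P) :
    ∃ T : ModuleCat.{u} R, Module.Free R T ∧ Module.Free R (↑P × ↑T) := by
  obtain ⟨s, hs⟩ := Module.projective_def'.mp hP
  have hs' : ∀ p : ↑P, Finsupp.linearCombination R (id : P → P) (s p) = p := fun p =>
    LinearMap.congr_fun hs p
  set K := LinearMap.ker (Finsupp.linearCombination R (id : P → P)) with hK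
  have eKP : (↥K × ↑P) ≃ₗ[R] (↑P →₀ R) :=
    { toFun := fun kp => (kp.1 : ↑P →₀ R) + s kp.2
      invFun := fun f => (⟨f - s (Finsupp.linearCombination R (id : P → P) f), by
        simp [hK, LinearMap.mem_ker, map_sub, hs']⟩,
        Finsupp.linearCombination R (id : P → P) f)
      map_add' := fun x y => by
        simp only [Prod.fst_add, Prod.snd_add, Submodule.coe_add, map_add]
        abel
      map_smul' := fun c x => by
        simp only [Prod.smul_fst, Prod.smul_snd, Submodule.coe_smul, map_smul,
          RingHom.id_apply, smul_add]
      left_inv := fun kp => by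
        obtain ⟨⟨k, hk⟩, p⟩ := kp
        have hk0 : Finsupp.linearCombination R (id : P → P) k = 0 := hk
        ext <;> simp [hk0, hs']
      right_inv := fun f => by simp }
  exact swindle_core (↑P) (↥K) (Module.Free.of_equiv eKP.symm)

end Swindle

/-- cast equivalence along an equality of `ModuleCat` objects -/
def castE {X Y : ModuleCat.{u} R} (h : X = Y) : ↑X ≃ₗ[R] ↑Y := h ▸ LinearEquiv.refl R X

variable {𝒳 : ModuleCat.{u} R → Prop} (C : XCompleteResolution R 𝒳) (T : ℤ → ModuleCat.{u} R)

/-- The auxiliary "disk" modules. -/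
def AA : ℤ → ModuleCat.{u} R
  | .ofNat k => T (.ofNat k)
  | .negSucc 0 => ModuleCat.of R PUnit
  | .negSucc (k+1) => T (.negSucc k)

/-- The modules of the new complete resolution. -/
def Pn (n : ℤ) : ModuleCat.{u} R :=
  ModuleCat.of R ((↑(C.P n) × ↑(AA T n)) × ↑(AA T (n - 1)))

/-- index cast for the disk family -/
def sigE (n : ℤ) : ↑(AA T n) ≃ₗ[R] ↑(AA T (n + 1 - 1)) :=
  castE (congrArg (AA T) (by omega))

/-- The differentials of the new complete resolution. -/
def Dn (n : ℤ) : ↑(Pn C T n) →ₗ[R] ↑(Pn C T (n + 1)) :=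
  LinearMap.prod
    (LinearMap.prod
      ((C.d n).comp ((LinearMap.fst R _ _).comp
        (LinearMap.fst R (↑(C.P n) × ↑(AA T n)) (↑(AA T (n - 1))))))
      0)
    ((sigE T n).toLinearMap.comp ((LinearMap.snd R _ _).comp
      (LinearMap.fst R (↑(C.P n) × ↑(AA T n)) (↑(AA T (n - 1))))))

@[simp] lemma Dn_apply (n : ℤ) (x : ↑(Pn C T n)) :
    Dn C T n x = ((C.d n x.1.1, 0), sigE T n x.1.2) := rfl


section lemmas

lemma freeAA (hT1 : ∀ n, Module.Free R (T n)) : ∀ m : ℤ, Module.Free R (AA T m)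
  | .ofNat k => hT1 _
  | .negSucc 0 => show Module.Free R PUnit.{u+1} from inferInstance
  | .negSucc (k+1) => hT1 _

/-- shuffle for freeness -/
lemma free_shuffle {M X Y : Type u} [AddCommGroup M] [AddCommGroup X] [AddCommGroup Y]
    [Module R M] [Module R X] [Module R Y]
    (h : Module.Free R (M × Y)) (hX : Module.Free R X) :
    Module.Free R ((M × X) × Y) := by
  haveI := h; haveI := hX
  have e : ((M × Y) × X) ≃ₗ[R] ((M × X) × Y) :=
    (LinearEquiv.prodAssoc R M Y X).trans <|
      (((LinearEquiv.refl R M).prodCongr (LinearEquiv.prodComm R Y X)).trans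
        (LinearEquiv.prodAssoc R M X Y).symm)
  exact Module.Free.of_equiv e

lemma freePn (hT1 : ∀ n, Module.Free R (T n))
    (hT2 : ∀ n, Module.Free R (↑(C.P n) × ↑(T n))) : ∀ n : ℤ, Module.Free R (Pn C T n) := by
  intro n
  match n with
  | .ofNat k =>
    haveI h1 : Module.Free R (↑(C.P (Int.ofNat k)) × ↑(AA T (Int.ofNat k))) := hT2 _
    haveI h2 : Module.Free R (AA T (Int.ofNat k - 1)) := freeAA T hT1 _
    exact (inferInstance :
      Module.Free R ((↑(C.P (Int.ofNat k)) × ↑(AA T (Int.ofNat k))) × ↑(AA T (Int.ofNat k - 1))))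
  | .negSucc 0 =>
    have h : AA T (Int.negSucc 0 - 1) = T (Int.negSucc 0) := rfl
    show Module.Free R ((↑(C.P (Int.negSucc 0)) × ↑(AA T (Int.negSucc 0)))
      × ↑(AA T (Int.negSucc 0 - 1)))
    rw [h]
    exact free_shuffle (hT2 _) (show Module.Free R PUnit.{u+1} from inferInstance)
  | .negSucc (k+1) =>
    have h : AA T (Int.negSucc (k+1) - 1) = T (Int.negSucc (k+1)) := rfl
    show Module.Free R ((↑(C.P (Int.negSucc (k+1))) × ↑(AA T (Int.negSucc (k+1))))
      × ↑(AA T (Int.negSucc (k+1) - 1)))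
    rw [h]
    exact free_shuffle (hT2 _) (hT1 (Int.negSucc k))

lemma exactDn (n : ℤ) : Function.Exact (Dn C T n) (Dn C T (n+1)) := by
  rintro ⟨⟨p, a⟩, b⟩
  constructor
  · intro h
    have h1 : C.d (n+1) p = 0 := congrArg (fun z => z.1.1) h
    have h2 : sigE T (n+1) a = 0 := congrArg (fun z => z.2) h
    have ha : a = 0 := by
      apply (sigE T (n+1)).injective
      rw [h2, map_zero]
    obtain ⟨q, hq⟩ := (C.exact n p).mp h1
    refine ⟨((q, (sigE T n).symm b), 0), ?_⟩
    erw [Dn_apply]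
    exact Prod.ext (Prod.ext hq ha.symm) ((sigE T n).apply_symm_apply b)
  · rintro ⟨x, hx⟩
    rw [← hx, Dn_apply, Dn_apply]
    exact Prod.ext (Prod.ext ((C.exact n _).mpr ⟨_, rfl⟩) rfl) (map_zero _)


lemma homExactDn (Y : ModuleCat.{u} R) (hY : 𝒳 Y) (n : ℤ)
    (hhe : Function.Exact (fun f : ↑(C.P (n + 1 + 1)) →ₗ[R] ↑Y => f ∘ₗ C.d (n + 1))
      (fun f : ↑(C.P (n + 1)) →ₗ[R] ↑Y => f ∘ₗ C.d n)) :
    Function.Exact (fun f : ↑(Pn C T (n + 1 + 1)) →ₗ[R] ↑Y => f ∘ₗ Dn C T (n + 1))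
      (fun f : ↑(Pn C T (n + 1)) →ₗ[R] ↑Y => f ∘ₗ Dn C T n) := by
  intro f
  constructor
  · intro hf
    set i2 := LinearMap.inl R (↑(C.P (n+1)) × ↑(AA T (n+1))) (↑(AA T (n + 1 - 1))) with hi2
    set f₁ : ↑(C.P (n+1)) →ₗ[R] ↑Y :=
      f ∘ₗ i2 ∘ₗ LinearMap.inl R ↑(C.P (n+1)) ↑(AA T (n+1)) with hf₁def
    set f₂ : ↑(AA T (n+1)) →ₗ[R] ↑Y :=
      f ∘ₗ i2 ∘ₗ LinearMap.inr R ↑(C.P (n+1)) ↑(AA T (n+1)) with hf₂def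
    have hf' : ∀ x, f (Dn C T n x) = 0 := fun x => LinearMap.congr_fun hf x
    have hf₁ : f₁ ∘ₗ C.d n = 0 := by
      apply LinearMap.ext; intro p
      have h0 := hf' ((p, 0), 0)
      erw [Dn_apply] at h0
      simp [map_zero] at h0
      exact h0
    obtain ⟨g₁, hg₁⟩ := (hhe f₁).mp hf₁
    have hb : ∀ bb : ↑(AA T (n + 1 - 1)), f ((0, 0), bb) = 0 := by
      intro bb
      have h0 := hf' ((0, (sigE T n).symm bb), 0)
      erw [Dn_apply] at h0
      simpa [map_zero] using h0
    refine ⟨g₁ ∘ₗ ((LinearMap.fst R _ _).comp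
        (LinearMap.fst R (↑(C.P (n+1+1)) × ↑(AA T (n+1+1))) (↑(AA T (n+1+1-1)))))
      + f₂ ∘ₗ (sigE T (n+1)).symm.toLinearMap ∘ₗ
          (LinearMap.snd R (↑(C.P (n+1+1)) × ↑(AA T (n+1+1))) (↑(AA T (n+1+1-1)))), ?_⟩
    apply LinearMap.ext; rintro ⟨⟨p, a⟩, b⟩
    have e1 : g₁ (C.d (n+1) p) = f₁ p := LinearMap.congr_fun hg₁ p
    have hdec : ((p, a), b) = ((((p, 0), 0) : ↑(Pn C T (n+1)))) + ((0, a), 0) + ((0, 0), b) := by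
      refine Prod.ext (Prod.ext ?_ ?_) ?_ <;> simp
    show g₁ ((Dn C T (n+1) ((p, a), b)).1.1)
        + f₂ ((sigE T (n+1)).symm ((Dn C T (n+1) ((p, a), b)).2)) = f ((p, a), b)
    erw [Dn_apply]
    show g₁ (C.d (n+1) p) + f₂ ((sigE T (n+1)).symm (sigE T (n+1) a)) = f ((p, a), b)
    rw [e1, (sigE T (n+1)).symm_apply_apply]
    conv_rhs => rw [hdec]
    erw [map_add, map_add, hb, add_zero]
    rfl
  · rintro ⟨g, hg⟩
    rw [← hg]
    apply LinearMap.ext; intro x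
    show g (Dn C T (n+1) (Dn C T n x)) = 0
    rw [(exactDn C T n (Dn C T n x)).mpr ⟨x, rfl⟩, map_zero]

/-- The kernel–image equivalence at a spot where the added disk is trivial. -/
noncomputable def kerRangeEquiv (n : ℤ) (hsub : Subsingleton ↑(AA T n)) :
    ↥(LinearMap.ker (C.d (n+1))) ≃ₗ[R] ↥(LinearMap.range (Dn C T n)) := by
  refine LinearEquiv.ofBijective
    (LinearMap.codRestrict _
      (((LinearMap.inl R (↑(C.P (n+1)) × ↑(AA T (n+1))) (↑(AA T (n + 1 - 1)))).comp
        (LinearMap.inl R ↑(C.P (n+1)) ↑(AA T (n+1)))).comp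
        (LinearMap.ker (C.d (n+1))).subtype) ?_) ⟨?_, ?_⟩
  · intro x
    obtain ⟨q, hq⟩ := (C.exact n x.1).mp x.2
    exact ⟨((q, 0), 0), by
      erw [Dn_apply]
      exact Prod.ext (Prod.ext hq rfl) (map_zero _)⟩
  · intro x y h
    apply Subtype.ext
    exact congrArg (fun z => z.1.1.1) h
  · rintro ⟨_, z, rfl⟩
    haveI := hsub
    have ha : z.1.2 = (0 : ↑(AA T n)) := Subsingleton.elim _ _
    refine ⟨⟨C.d n z.1.1, LinearMap.mem_ker.mpr ((C.exact n _).mpr ⟨z.1.1, rfl⟩)⟩, ?_⟩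
    apply Subtype.ext
    show ((C.d n z.1.1, 0), 0) = Dn C T n z
    rw [Dn_apply]
    exact Prod.ext (Prod.ext rfl rfl) (by rw [ha, map_zero])

end lemmas
end XGPaux

/-- Every `𝒳`-Gorenstein projective module admits an `𝒳`-complete projective
resolution consisting of free modules, in which it is the image of `F_0 → F^0`. -/
theorem xGorensteinProjective_exists_free_complete_resolution
    (R : Type u) [Ring R] (𝒳 : ModuleCat.{u} R → Prop)
    (h𝒳 : ∀ P : ModuleCat.{u} R, Module.Projective R P → 𝒳 P)
    (G : ModuleCat.{u} R) (hG : XGorensteinProjective R 𝒳 G) :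
    ∃ C : XCompleteResolution R 𝒳, (∀ n, Module.Free R (C.P n)) ∧
      Nonempty (G ≃ₗ[R] LinearMap.range (C.d (-1))) := by
  obtain ⟨C, ⟨e⟩⟩ := hG
  choose T hT1 hT2 using fun n => XGPaux.exists_free_compl (C.P n) (C.projective n)
  refine ⟨⟨XGPaux.Pn C T, XGPaux.Dn C T,
      fun n => @Module.Projective.of_free R _ _ _ _ (XGPaux.freePn C T hT1 hT2 n),
      XGPaux.exactDn C T,
      fun Y hY n => XGPaux.homExactDn C T Y hY n (C.homExact Y hY n)⟩,
    fun n => XGPaux.freePn C T hT1 hT2 n, ?_⟩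
  haveI hsub : Subsingleton ↑(XGPaux.AA T (-1)) := by
    rw [show XGPaux.AA T (-1) = ModuleCat.of R PUnit.{u+1} from rfl]
    exact (inferInstance : Subsingleton PUnit)
  exact ⟨(show G ≃ₗ[R] ↥(LinearMap.ker (C.d ((-1 : ℤ) + 1))) from e).trans
    (XGPaux.kerRangeEquiv C T (-1) hsub)⟩
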